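/- If the linear span of a norm-one vector z in a Banach space X is an L-summand of X, then z is a spear vector of X. -/
import Mathlib


/-- A spear vector: `z ∈ S_X` with `‖z + 𝕋x‖ = 1 + ‖x‖` for every `x ∈ X`. -/
def IsSpear (𝕜 : Type*) {X : Type*} [RCLike 𝕜] [NormedAddCommGroup X]
    [NormedSpace 𝕜 X] (z : X) : Prop :=
  ‖z‖ = 1 ∧ ∀ x : X, sSup {r : ℝ | ∃ ω : 𝕜, ‖ω‖ = 1 ∧ r = ‖z + ω • x‖} = 1 + ‖x‖

/-- if the linear span of a norm-one vector `z` is an `L`-summand of `X`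
(i.e. `X = span{z} ⊕₁ Z` for some closed subspace `Z`, meaning `‖y + w‖ = ‖y‖ + ‖w‖`
for `y ∈ span{z}`, `w ∈ Z`), then `z` is a spear vector of `X`. -/
theorem stmt13 {𝕜 X : Type*} [RCLike 𝕜] [NormedAddCommGroup X] [NormedSpace 𝕜 X]
    [CompleteSpace X] (z : X) (hz : ‖z‖ = 1)
    (hL : ∃ Z : Submodule 𝕜 X, IsClosed (Z : Set X) ∧
      IsCompl (Submodule.span 𝕜 {z}) Z ∧
      ∀ y ∈ Submodule.span 𝕜 {z}, ∀ w ∈ Z, ‖y + w‖ = ‖y‖ + ‖w‖) :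
    IsSpear 𝕜 z := by
  obtain ⟨Z, _, hcompl, hsum⟩ := hL
  refine ⟨hz, fun x => ?_⟩
  -- decompose x = a • z + w
  have hx : x ∈ Submodule.span 𝕜 {z} ⊔ Z := by
    rw [hcompl.codisjoint.eq_top]; trivial
  rw [Submodule.mem_sup] at hx
  obtain ⟨y, hy, w, hw, hyw⟩ := hx
  obtain ⟨a, rfl⟩ := Submodule.mem_span_singleton.mp hy
  -- choose the optimal ω
  set ω₀ : 𝕜 := if a = 0 then 1 else (starRingEnd 𝕜) a / (‖a‖ : 𝕜) with hω₀
  have hω₀norm : ‖ω₀‖ = 1 := by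
    rw [hω₀]
    split_ifs with h
    · simp
    · rw [norm_div, RCLike.norm_conj, RCLike.norm_ofReal, abs_of_nonneg (norm_nonneg a),
        div_self (norm_ne_zero_iff.mpr h)]
  have hω₀a : ω₀ * a = (‖a‖ : 𝕜) := by
    rw [hω₀]
    split_ifs with h
    · simp [h]
    · have ha : (‖a‖ : 𝕜) ≠ 0 := by exact_mod_cast norm_ne_zero_iff.mpr h
      rw [div_mul_eq_mul_div, RCLike.conj_mul, sq, mul_div_assoc, div_self ha, mul_one]
  have hxnorm : ‖x‖ = ‖a‖ + ‖w‖ := by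
    rw [← hyw, hsum _ hy _ hw, norm_smul, hz, mul_one]
  have key : ‖z + ω₀ • x‖ = 1 + ‖x‖ := by
    have : z + ω₀ • x = (1 + ω₀ * a) • z + ω₀ • w := by
      rw [← hyw]; module
    rw [this, hsum _ (Submodule.smul_mem _ _ (Submodule.mem_span_singleton_self z))
      _ (Submodule.smul_mem _ _ hw), norm_smul, norm_smul, hz, mul_one, hω₀norm, one_mul,
      hω₀a, hxnorm]
    have : (1 : 𝕜) + (‖a‖ : 𝕜) = ((1 + ‖a‖ : ℝ) : 𝕜) := by push_cast; ring
    rw [this, RCLike.norm_ofReal, abs_of_nonneg (by positivity)]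
    ring
  have hub : ∀ r ∈ {r : ℝ | ∃ ω : 𝕜, ‖ω‖ = 1 ∧ r = ‖z + ω • x‖}, r ≤ 1 + ‖x‖ := by
    rintro r ⟨ω, hω, rfl⟩
    calc ‖z + ω • x‖ ≤ ‖z‖ + ‖ω • x‖ := norm_add_le _ _
      _ = 1 + ‖x‖ := by rw [hz, norm_smul, hω, one_mul]
  exact le_antisymm (Real.sSup_le hub (by positivity))
    (le_csSup ⟨1 + ‖x‖, hub⟩ ⟨ω₀, hω₀norm, key.symm⟩)
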